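/- Let n be a real number, let q be a real number with q ≠ n, let 0 < r₀ < r₁, and let φ : [r₀, r₁] → ℝ be continuously differentiable. Then ((q−n)²/4) ∫_{r₀}^{r₁} φ(r)² r^{q−2} dr ≤ ∫_{r₀}^{r₁} ( φ′(r) + ((n−1)/(2r)) φ(r) )² r^{q} dr + ((q−n)/2) ( r₁^{q−1} φ(r₁)² − r₀^{q−1} φ(r₀)² ). -/

import Mathlib

open MeasureTheory

/-- **Hardy inequality, variant for the conjugated radial derivative.**
If `q ≠ n`, `0 < r₀ < r₁` and `φ` is continuously differentiable on `[r₀, r₁]`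
(with derivative `φ'`), then
`((q−n)²/4) ∫_{r₀}^{r₁} φ² r^{q−2} dr
  ≤ ∫_{r₀}^{r₁} (φ' + ((n−1)/(2r)) φ)² r^q dr
    + ((q−n)/2) (r₁^{q−1} φ(r₁)² − r₀^{q−1} φ(r₀)²)`. -/
theorem hardy_inequality_variant
    (n q r₀ r₁ : ℝ) (hq : q ≠ n) (hr₀ : 0 < r₀) (hr : r₀ < r₁)
    (φ φ' : ℝ → ℝ)
    (hderiv : ∀ r ∈ Set.Icc r₀ r₁, HasDerivAt φ (φ' r) r)
    (hcont : ContinuousOn φ' (Set.Icc r₀ r₁)) :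
    ((q - n) ^ 2 / 4) * ∫ r in r₀..r₁, (φ r) ^ 2 * r ^ (q - 2) ≤
      (∫ r in r₀..r₁, (φ' r + ((n - 1) / (2 * r)) * φ r) ^ 2 * r ^ q)
        + ((q - n) / 2) * (r₁ ^ (q - 1) * (φ r₁) ^ 2 - r₀ ^ (q - 1) * (φ r₀) ^ 2) := by
  have hr01 : r₀ ≤ r₁ := hr.le
  have huIcc : Set.uIcc r₀ r₁ = Set.Icc r₀ r₁ := Set.uIcc_of_le hr01
  have hpos : ∀ r ∈ Set.Icc r₀ r₁, 0 < r := fun r hrm => lt_of_lt_of_le hr₀ hrm.1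
  have hφc : ContinuousOn φ (Set.Icc r₀ r₁) := fun r hrm =>
    ((hderiv r hrm).continuousAt).continuousWithinAt
  have hrp : ∀ s : ℝ, ContinuousOn (fun r : ℝ => r ^ s) (Set.Icc r₀ r₁) := fun s =>
    ContinuousOn.rpow_const continuousOn_id (fun r hrm => Or.inl (hpos r hrm).ne')
  set c : ℝ := (q - n) / 2 with hc
  set g : ℝ → ℝ := fun r => (q-1) * r^(q-2) * (φ r)^2 + r^(q-1) * (2 * φ r * φ' r) with hg
  have hgc : ContinuousOn g (Set.Icc r₀ r₁) := by
    apply ContinuousOn.add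
    · exact (continuousOn_const.mul (hrp _)).mul (hφc.pow 2)
    · exact (hrp _).mul ((continuousOn_const.mul hφc).mul hcont)
  have hint3 : IntervalIntegrable g volume r₀ r₁ :=
    ContinuousOn.intervalIntegrable (by rw [huIcc]; exact hgc)
  have hFTC : ∫ r in r₀..r₁, g r = r₁^(q-1) * (φ r₁)^2 - r₀^(q-1) * (φ r₀)^2 := by
    apply intervalIntegral.integral_eq_sub_of_hasDerivAt (f := fun r => r^(q-1) * (φ r)^2) (f' := g)
    · intro r hrm
      rw [huIcc] at hrm
      have h1 := (Real.hasDerivAt_rpow_const (x := r) (p := q-1)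
        (Or.inl (hpos r hrm).ne')).mul ((hderiv r hrm).pow 2)
      convert h1 using 1
      · rfl
      · rfl
      have hq2 : q - 1 - 1 = q - 2 := by ring
      simp only [hg, hq2, Pi.pow_apply]
      push_cast
      ring
    · exact hint3
  have hψc : ContinuousOn (fun r => (φ' r + ((n - 1) / (2 * r)) * φ r) ^ 2 * r ^ q)
      (Set.Icc r₀ r₁) := by
    apply ContinuousOn.mul _ (hrp q)
    apply ContinuousOn.pow
    apply hcont.add
    apply ContinuousOn.mul _ hφc
    exact ContinuousOn.div continuousOn_const
      ((continuous_const.mul continuous_id).continuousOn)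
      (fun r hrm => by have := hpos r hrm; positivity)
  have hint1 : IntervalIntegrable (fun r => (φ' r + ((n - 1) / (2 * r)) * φ r) ^ 2 * r ^ q)
      volume r₀ r₁ := ContinuousOn.intervalIntegrable (by rw [huIcc]; exact hψc)
  have hint2 : IntervalIntegrable (fun r => (φ r)^2 * r^(q-2)) volume r₀ r₁ :=
    ContinuousOn.intervalIntegrable (by rw [huIcc]; exact (hφc.pow 2).mul (hrp _))
  have key : (0:ℝ) ≤ ∫ r in r₀..r₁,
      ((φ' r + ((n - 1) / (2 * r)) * φ r) ^ 2 * r ^ q + c * g r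
        - c^2 * ((φ r)^2 * r^(q-2))) := by
    apply intervalIntegral.integral_nonneg hr01
    intro r hrm
    have hrpos := hpos r hrm
    have e2 : r ^ q = r ^ (q-2) * r^(2:ℕ) := by
      rw [← Real.rpow_natCast r 2, ← Real.rpow_add hrpos]; norm_num
    have e1 : r ^ (q-1) = r ^ (q-2) * r := by
      rw [show q - 1 = (q-2) + 1 by ring, Real.rpow_add hrpos, Real.rpow_one]
    have key_eq : (φ' r + ((n - 1) / (2 * r)) * φ r) ^ 2 * r ^ q + c * g r
        - c^2 * ((φ r)^2 * r^(q-2))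
        = r^(q-2) * (r * φ' r + ((q-1)/2) * φ r)^2 := by
      simp only [hg, hc, e1, e2]
      field_simp
      ring
    rw [key_eq]
    positivity
  rw [intervalIntegral.integral_sub (hint1.add (hint3.const_mul c))
      ((hint2.const_mul (c^2))),
    intervalIntegral.integral_add hint1 (hint3.const_mul c),
    intervalIntegral.integral_const_mul, intervalIntegral.integral_const_mul, hFTC] at key
  have hc2 : (q - n) ^ 2 / 4 = c^2 := by rw [hc]; ring
  rw [hc2]
  linarith [key]
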